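/- arXiv:2509.16134 — 7 statements merged into one kernel-verified Lean document; each statement's English description precedes it below -/
import Mathlib

section
/- Let T be a positive integer, let C ⊆ Fin T be a set of time steps, let m > 0 be a real number, and let e_lo, e_hi be real numbers with 0 ≤ e_lo ≤ e_hi ≤ m·|C|. Define the individual flexibility set F := {u : Fin T → ℝ | u t = 0 for all t ∉ C, 0 ≤ u t ≤ m for all t ∈ C, and e_lo ≤ ∑_t u t ≤ e_hi}. Define set functions p, b : Finset (Fin T) → ℝ by p(A) = max(0, e_lo − m·(|C| − |A ∩ C|)) and b(A) = min(e_hi, m·|A ∩ C|). Then F = {u : Fin T → ℝ | for every A ⊆ Fin T, p(A) ≤ ∑_{t ∈ A} u t ≤ b(A)}. -/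
/-- The individual flexibility set of an EV equals the generalized
polymatroid `Q(p, b)` generated by `p(A) = max (0, e_lo − m·(|C| − |A ∩ C|))` and
`b(A) = min (e_hi, m·|A ∩ C|)`. -/
theorem individual_flexibility_eq_gPolymatroid
    (T : ℕ) (hT : 0 < T) (C : Finset (Fin T)) (m : ℝ) (hm : 0 < m)
    (e_lo e_hi : ℝ) (he0 : 0 ≤ e_lo) (hee : e_lo ≤ e_hi)
    (he2 : e_hi ≤ m * (C.card : ℝ)) :
    {u : Fin T → ℝ |
        (∀ t ∉ C, u t = 0) ∧ (∀ t ∈ C, 0 ≤ u t ∧ u t ≤ m) ∧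
        e_lo ≤ ∑ t, u t ∧ ∑ t, u t ≤ e_hi} =
    {u : Fin T → ℝ | ∀ A : Finset (Fin T),
        max 0 (e_lo - m * ((C.card : ℝ) - ((A ∩ C).card : ℝ))) ≤ ∑ t ∈ A, u t ∧
        ∑ t ∈ A, u t ≤ min e_hi (m * ((A ∩ C).card : ℝ))} := by
  ext u
  simp only [Set.mem_setOf_eq]
  constructor
  · rintro ⟨h0, hb, hlo, hhi⟩ A
    have hnn : ∀ t, 0 ≤ u t := by
      intro t
      by_cases ht : t ∈ C
      · exact (hb t ht).1
      · rw [h0 t ht]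
    have hrestrict : ∀ B : Finset (Fin T), ∑ t ∈ B, u t = ∑ t ∈ B ∩ C, u t := by
      intro B
      refine (Finset.sum_subset Finset.inter_subset_left ?_).symm
      intro t htB htn
      exact h0 t (fun htC => htn (Finset.mem_inter.mpr ⟨htB, htC⟩))
    have hub : ∀ B : Finset (Fin T), ∑ t ∈ B, u t ≤ m * ((B ∩ C).card : ℝ) := by
      intro B
      rw [hrestrict B, mul_comm]
      calc ∑ t ∈ B ∩ C, u t ≤ ∑ _t ∈ B ∩ C, m :=
            Finset.sum_le_sum fun t ht => (hb t (Finset.mem_inter.mp ht).2).2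
        _ = ((B ∩ C).card : ℝ) * m := by rw [Finset.sum_const, nsmul_eq_mul]
    have hsub : ∑ t ∈ A, u t ≤ ∑ t, u t :=
      Finset.sum_le_sum_of_subset_of_nonneg (Finset.subset_univ A)
        (fun t _ _ => hnn t)
    have hAnn : 0 ≤ ∑ t ∈ A, u t := Finset.sum_nonneg fun t _ => hnn t
    have hcompl : ∑ t ∈ A, u t + ∑ t ∈ Aᶜ, u t = ∑ t, u t :=
      Finset.sum_add_sum_compl A u
    have hcard : ((Aᶜ ∩ C).card : ℝ) = (C.card : ℝ) - ((A ∩ C).card : ℝ) := by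
      have h1 : (C \ A).card + (A ∩ C).card = C.card := by
        rw [Finset.inter_comm]; exact Finset.card_sdiff_add_card_inter C A
      have h2 : Aᶜ ∩ C = C \ A := by
        ext t
        simp [Finset.mem_sdiff, Finset.mem_inter, and_comm]
      rw [h2, eq_sub_iff_add_eq]
      exact_mod_cast h1
    constructor
    · have hcub := hub Aᶜ
      rw [hcard] at hcub
      exact max_le hAnn (by linarith)
    · refine le_min ?_ (hub A)
      exact hsub.trans hhi
  · intro h
    have hzero : ∀ t ∉ C, u t = 0 := by
      intro t ht
      have h1 := h {t}
      have hi : ({t} : Finset (Fin T)) ∩ C = ∅ := by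
        simp [Finset.singleton_inter_of_notMem ht]
      rw [hi] at h1
      simp at h1
      linarith [h1.1.1, h1.2.2]
    refine ⟨hzero, ?_, ?_, ?_⟩
    · intro t ht
      have h1 := h {t}
      have hi : ({t} : Finset (Fin T)) ∩ C = {t} := by
        simp [Finset.singleton_inter_of_mem ht]
      rw [hi] at h1
      simp at h1
      exact ⟨h1.1.1, h1.2.2⟩
    · have h1 := h Finset.univ
      have hi : (Finset.univ : Finset (Fin T)) ∩ C = C := Finset.univ_inter C
      rw [hi] at h1
      have := h1.1
      simp at this
      linarith [le_max_right (0:ℝ) e_lo, this]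
    · have h1 := h Finset.univ
      have hi : (Finset.univ : Finset (Fin T)) ∩ C = C := Finset.univ_inter C
      rw [hi] at h1
      exact h1.2.trans (min_le_left _ _)
end

section
/- Let T be a positive integer, C ⊆ Fin T, m > 0 a real number, and e_lo, e_hi real numbers with 0 ≤ e_lo ≤ e_hi ≤ m·|C|. Define p(A) = max(0, e_lo − m·(|C| − |A ∩ C|)) and b(A) = min(e_hi, m·|A ∩ C|) for A ⊆ Fin T. Then the pair (p, b) satisfies the cross-inequality: for all X, Y ⊆ Fin T, b(X) − p(Y) ≥ b(X \ Y) − p(Y \ X). -/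
set_option maxHeartbeats 1000000


/-- The pair `(p, b)` generating the individual flexibility set satisfies
the cross-inequality `b(X) − p(Y) ≥ b(X \ Y) − p(Y \ X)`. -/
theorem pair_cross_inequality
    (T : ℕ) (hT : 0 < T) (C : Finset (Fin T)) (m : ℝ) (hm : 0 < m)
    (e_lo e_hi : ℝ) (he0 : 0 ≤ e_lo) (hee : e_lo ≤ e_hi)
    (he2 : e_hi ≤ m * (C.card : ℝ))
    (p b : Finset (Fin T) → ℝ)
    (hp : ∀ A, p A = max 0 (e_lo - m * ((C.card : ℝ) - ((A ∩ C).card : ℝ))))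
    (hb : ∀ A, b A = min e_hi (m * ((A ∩ C).card : ℝ))) :
    ∀ X Y : Finset (Fin T), b X - p Y ≥ b (X \ Y) - p (Y \ X) := by
  intro X Y
  rw [hb, hb, hp, hp]
  set s := X ∩ C with hs
  set t := Y ∩ C with ht
  have hXY : (X \ Y) ∩ C = s \ t := by
    ext x; simp [hs, ht, Finset.mem_sdiff, Finset.mem_inter]; tauto
  have hYX : (Y \ X) ∩ C = t \ s := by
    ext x; simp [hs, ht, Finset.mem_sdiff, Finset.mem_inter]; tauto
  rw [hXY, hYX]
  have h1 : (s \ t).card + (s ∩ t).card = s.card := Finset.card_sdiff_add_card_inter s t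
  have h2 : (t \ s).card + (t ∩ s).card = t.card := Finset.card_sdiff_add_card_inter t s
  have h3 : (s ∪ t).card + (s ∩ t).card = s.card + t.card := Finset.card_union_add_card_inter s t
  have h4 : (s ∪ t).card ≤ C.card := by
    apply Finset.card_le_card
    intro x hx
    rcases Finset.mem_union.1 hx with h | h
    · exact (Finset.mem_inter.1 h).2
    · exact (Finset.mem_inter.1 h).2
  have h5 : (t ∩ s).card = (s ∩ t).card := by rw [Finset.inter_comm]
  have hsum : (s \ t).card + (t \ s).card + (s ∩ t).card ≤ C.card := by omega
  have c1 : m * (s.card : ℝ) = m * ((s \ t).card : ℝ) + m * ((s ∩ t).card : ℝ) := by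
    rw [← mul_add]
    congr 1
    exact_mod_cast (h1.symm)
  have c2 : m * (t.card : ℝ) = m * ((t \ s).card : ℝ) + m * ((s ∩ t).card : ℝ) := by
    rw [← mul_add]
    congr 1
    have : (t \ s).card + (s ∩ t).card = t.card := by omega
    exact_mod_cast this.symm
  have c3 : m * ((s \ t).card : ℝ) + m * ((t \ s).card : ℝ) + m * ((s ∩ t).card : ℝ)
      ≤ m * (C.card : ℝ) := by
    rw [← mul_add, ← mul_add]
    apply mul_le_mul_of_nonneg_left _ hm.le
    exact_mod_cast hsum
  have c4 : (0:ℝ) ≤ m * ((s ∩ t).card : ℝ) := by positivity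
  have c5 : (0:ℝ) ≤ m * ((s \ t).card : ℝ) := by positivity
  have c6 : (0:ℝ) ≤ m * ((t \ s).card : ℝ) := by positivity
  have d1 : m * ((C.card : ℝ) - (t.card : ℝ)) = m * (C.card : ℝ) - m * (t.card : ℝ) :=
    mul_sub m _ _
  have d2 : m * ((C.card : ℝ) - ((t \ s).card : ℝ)) = m * (C.card : ℝ) - m * ((t \ s).card : ℝ) :=
    mul_sub m _ _
  rcases min_cases e_hi (m * ((s.card : ℝ))) with ⟨e1, f1⟩ | ⟨e1, f1⟩ <;>
  rcases min_cases e_hi (m * (((s \ t).card : ℝ))) with ⟨e2, f2⟩ | ⟨e2, f2⟩ <;>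
  rcases max_cases (0:ℝ) (e_lo - m * ((C.card : ℝ) - ((t).card : ℝ))) with ⟨e3, f3⟩ | ⟨e3, f3⟩ <;>
  rcases max_cases (0:ℝ) (e_lo - m * ((C.card : ℝ) - ((t \ s).card : ℝ))) with ⟨e4, f4⟩ | ⟨e4, f4⟩ <;>
  rw [e1, e2, e3, e4] <;>
  linarith [c1, c2, c3, c4, c5, c6, f1, f2, f3, f4, d1, d2, he0, hee, he2]
end

section
/- Let T be a positive integer, let I be a nonempty finite index set, and for each i ∈ I let p_i, b_i : Finset (Fin T) → ℝ be set functions with p_i(∅) = b_i(∅) = 0 such that p_i is supermodular, b_i is submodular, and b_i(X) − p_i(Y) ≥ b_i(X \ Y) − p_i(Y \ X) for all X, Y ⊆ Fin T. Then the Minkowski sum of the generalized polymatroids Q(p_i, b_i) equals the generalized polymatroid generated by the sums: ∑_{i ∈ I} Q(p_i, b_i) = Q(∑_{i ∈ I} p_i, ∑_{i ∈ I} b_i). -/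
open Finset

/-! Auxiliary lemmas for the Minkowski sum of generalized polymatroids. -/

section Aux

variable {T : ℕ}

/-- A "strong pair" (paramodular pair) relative to a ground set `S`. -/
def SPair (S : Finset (Fin T)) (p b : Finset (Fin T) → ℝ) : Prop :=
  p ∅ = 0 ∧ b ∅ = 0 ∧
  (∀ X ⊆ S, ∀ Y ⊆ S, p X + p Y ≤ p (X ∪ Y) + p (X ∩ Y)) ∧
  (∀ X ⊆ S, ∀ Y ⊆ S, b (X ∪ Y) + b (X ∩ Y) ≤ b X + b Y) ∧
  (∀ X ⊆ S, ∀ Y ⊆ S, b (X \ Y) - p (Y \ X) ≤ b X - p Y)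

lemma ins_inter_ins {α : Type*} [DecidableEq α] (t : α) (X Y : Finset α) :
    insert t X ∩ insert t Y = insert t (X ∩ Y) := by
  ext x; simp only [mem_inter, mem_insert]; tauto

lemma ins_sdiff_ins {α : Type*} [DecidableEq α] {t : α} {X : Finset α} (hX : t ∉ X)
    (Y : Finset α) : insert t X \ insert t Y = X \ Y := by
  ext x; simp only [mem_sdiff, mem_insert, not_or]
  constructor
  · rintro ⟨h1 | h1, h2, h3⟩
    · exact absurd h1 h2
    · exact ⟨h1, h3⟩
  · rintro ⟨h1, h2⟩
    exact ⟨Or.inr h1, fun h => hX (h ▸ h1), h2⟩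

lemma ins_sdiff {α : Type*} [DecidableEq α] {t : α} {Y : Finset α} (hY : t ∉ Y)
    (X : Finset α) : insert t X \ Y = insert t (X \ Y) := by
  ext x; simp only [mem_sdiff, mem_insert]
  constructor
  · rintro ⟨h1 | h1, h2⟩
    · exact Or.inl h1
    · exact Or.inr ⟨h1, h2⟩
  · rintro (h1 | ⟨h1, h2⟩)
    · exact ⟨Or.inl h1, h1 ▸ hY⟩
    · exact ⟨Or.inr h1, h2⟩

lemma sdiff_ins {α : Type*} [DecidableEq α] {t : α} {X : Finset α} (hX : t ∉ X)
    (Y : Finset α) : X \ insert t Y = X \ Y := by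
  ext x; simp only [mem_sdiff, mem_insert, not_or]
  constructor
  · rintro ⟨h1, _, h3⟩; exact ⟨h1, h3⟩
  · rintro ⟨h1, h2⟩; exact ⟨h1, fun h => hX (h ▸ h1), h2⟩

lemma max_add_max_le {a b c d K : ℝ} (h1 : a + c ≤ K) (h2 : a + d ≤ K)
    (h3 : b + c ≤ K) (h4 : b + d ≤ K) : max a b + max c d ≤ K := by
  rcases max_choice a b with h | h <;> rcases max_choice c d with h' | h' <;>
    rw [h, h'] <;> assumption

lemma le_min_add_min {a b c d K : ℝ} (h1 : K ≤ a + c) (h2 : K ≤ a + d)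
    (h3 : K ≤ b + c) (h4 : K ≤ b + d) : K ≤ min a b + min c d := by
  rcases min_choice a b with h | h <;> rcases min_choice c d with h' | h' <;>
    rw [h, h'] <;> assumption

lemma minmax_sub_le {m1 m2 M1 M2 n1 n2 N1 N2 : ℝ}
    (h11 : min m1 m2 - max M1 M2 ≤ n1 - N1)
    (h12 : min m1 m2 - max M1 M2 ≤ n1 - N2)
    (h21 : min m1 m2 - max M1 M2 ≤ n2 - N1)
    (h22 : min m1 m2 - max M1 M2 ≤ n2 - N2) :
    min m1 m2 - max M1 M2 ≤ min n1 n2 - max N1 N2 := by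
  rcases min_choice n1 n2 with h | h <;> rcases max_choice N1 N2 with h' | h' <;>
    rw [h, h'] <;> assumption

/-- Contracting a strong pair at an element `t` with value `α`. -/
lemma SPair_contract {S : Finset (Fin T)} {t : Fin T} (ht : t ∉ S)
    {p b : Finset (Fin T) → ℝ} {α : ℝ} (hsp : SPair (insert t S) p b)
    (h1 : p (insert t ∅) ≤ α) (h2 : α ≤ b (insert t ∅)) :
    SPair S (fun A => max (p A) (p (insert t A) - α))
            (fun A => min (b A) (b (insert t A) - α)) := by
  obtain ⟨hp0, hb0, hsuper, hsub, hcross⟩ := hsp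
  have hS : S ⊆ insert t S := subset_insert _ _
  refine ⟨?_, ?_, ?_, ?_, ?_⟩
  · simp only [hp0]
    exact max_eq_left (by linarith)
  · simp only [hb0]
    exact min_eq_left (by linarith)
  · intro X hX Y hY
    have htX : t ∉ X := fun h => ht (hX h)
    have htY : t ∉ Y := fun h => ht (hY h)
    have hiX : insert t X ⊆ insert t S := insert_subset_insert _ hX
    have hiY : insert t Y ⊆ insert t S := insert_subset_insert _ hY
    apply max_add_max_le
    · have h := hsuper X (hX.trans hS) Y (hY.trans hS)
      linarith [le_max_left (p (X ∪ Y)) (p (insert t (X ∪ Y)) - α),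
        le_max_left (p (X ∩ Y)) (p (insert t (X ∩ Y)) - α)]
    · have h := hsuper X (hX.trans hS) (insert t Y) hiY
      rw [union_insert, inter_insert_of_notMem htX] at h
      linarith [le_max_right (p (X ∪ Y)) (p (insert t (X ∪ Y)) - α),
        le_max_left (p (X ∩ Y)) (p (insert t (X ∩ Y)) - α)]
    · have h := hsuper (insert t X) hiX Y (hY.trans hS)
      rw [insert_union, insert_inter_of_notMem htY] at h
      linarith [le_max_right (p (X ∪ Y)) (p (insert t (X ∪ Y)) - α),
        le_max_left (p (X ∩ Y)) (p (insert t (X ∩ Y)) - α)]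
    · have h := hsuper (insert t X) hiX (insert t Y) hiY
      rw [insert_union, union_insert, insert_idem, ins_inter_ins] at h
      linarith [le_max_right (p (X ∪ Y)) (p (insert t (X ∪ Y)) - α),
        le_max_right (p (X ∩ Y)) (p (insert t (X ∩ Y)) - α)]
  · intro X hX Y hY
    have htX : t ∉ X := fun h => ht (hX h)
    have htY : t ∉ Y := fun h => ht (hY h)
    have hiX : insert t X ⊆ insert t S := insert_subset_insert _ hX
    have hiY : insert t Y ⊆ insert t S := insert_subset_insert _ hY
    apply le_min_add_min
    · have h := hsub X (hX.trans hS) Y (hY.trans hS)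
      linarith [min_le_left (b (X ∪ Y)) (b (insert t (X ∪ Y)) - α),
        min_le_left (b (X ∩ Y)) (b (insert t (X ∩ Y)) - α)]
    · have h := hsub X (hX.trans hS) (insert t Y) hiY
      rw [union_insert, inter_insert_of_notMem htX] at h
      linarith [min_le_right (b (X ∪ Y)) (b (insert t (X ∪ Y)) - α),
        min_le_left (b (X ∩ Y)) (b (insert t (X ∩ Y)) - α)]
    · have h := hsub (insert t X) hiX Y (hY.trans hS)
      rw [insert_union, insert_inter_of_notMem htY] at h
      linarith [min_le_right (b (X ∪ Y)) (b (insert t (X ∪ Y)) - α),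
        min_le_left (b (X ∩ Y)) (b (insert t (X ∩ Y)) - α)]
    · have h := hsub (insert t X) hiX (insert t Y) hiY
      rw [insert_union, union_insert, insert_idem, ins_inter_ins] at h
      linarith [min_le_right (b (X ∪ Y)) (b (insert t (X ∪ Y)) - α),
        min_le_right (b (X ∩ Y)) (b (insert t (X ∩ Y)) - α)]
  · intro X hX Y hY
    have htX : t ∉ X := fun h => ht (hX h)
    have htY : t ∉ Y := fun h => ht (hY h)
    have hiX : insert t X ⊆ insert t S := insert_subset_insert _ hX
    have hiY : insert t Y ⊆ insert t S := insert_subset_insert _ hY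
    apply minmax_sub_le
    · have h := hcross X (hX.trans hS) Y (hY.trans hS)
      linarith [min_le_left (b (X \ Y)) (b (insert t (X \ Y)) - α),
        le_max_left (p (Y \ X)) (p (insert t (Y \ X)) - α)]
    · have h := hcross X (hX.trans hS) (insert t Y) hiY
      rw [sdiff_ins htX, ins_sdiff htX] at h
      linarith [min_le_left (b (X \ Y)) (b (insert t (X \ Y)) - α),
        le_max_right (p (Y \ X)) (p (insert t (Y \ X)) - α)]
    · have h := hcross (insert t X) hiX Y (hY.trans hS)
      rw [ins_sdiff htY, sdiff_ins htY] at h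
      linarith [min_le_right (b (X \ Y)) (b (insert t (X \ Y)) - α),
        le_max_left (p (Y \ X)) (p (insert t (Y \ X)) - α)]
    · have h := hcross (insert t X) hiX (insert t Y) hiY
      rw [ins_sdiff_ins htX, ins_sdiff_ins htY] at h
      linarith [min_le_left (b (X \ Y)) (b (insert t (X \ Y)) - α),
        le_max_left (p (Y \ X)) (p (insert t (Y \ X)) - α)]

end Aux

section Decomp

variable {T : ℕ}

/-- Decomposition of a vector in `Q(p₁+p₂, b₁+b₂)` into a sum of vectors of the summands. -/
lemma decomp_two (S : Finset (Fin T)) :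
    ∀ p1 b1 p2 b2 : Finset (Fin T) → ℝ, SPair S p1 b1 → SPair S p2 b2 →
    ∀ u : Fin T → ℝ,
    (∀ A ⊆ S, p1 A + p2 A ≤ ∑ s ∈ A, u s ∧ ∑ s ∈ A, u s ≤ b1 A + b2 A) →
    ∃ v w : Fin T → ℝ, v + w = u ∧
      (∀ A ⊆ S, p1 A ≤ ∑ s ∈ A, v s ∧ ∑ s ∈ A, v s ≤ b1 A) ∧
      (∀ A ⊆ S, p2 A ≤ ∑ s ∈ A, w s ∧ ∑ s ∈ A, w s ≤ b2 A) := by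
  induction S using Finset.induction_on with
  | empty =>
    intro p1 b1 p2 b2 h1 h2 u _
    refine ⟨u, 0, by simp, ?_, ?_⟩ <;> intro A hA <;>
      rw [Finset.subset_empty.mp hA] <;>
      simp [h1.1, h1.2.1, h2.1, h2.2.1]
  | @insert t S' ht IH =>
    intro p1 b1 p2 b2 hsp1 hsp2 u hu
    have hp10 := hsp1.1; have hb10 := hsp1.2.1
    have hsuper1 := hsp1.2.2.1; have hsub1 := hsp1.2.2.2.1; have hcross1 := hsp1.2.2.2.2
    have hp20 := hsp2.1; have hb20 := hsp2.2.1
    have hsuper2 := hsp2.2.2.1; have hsub2 := hsp2.2.2.2.1; have hcross2 := hsp2.2.2.2.2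
    have hS : S' ⊆ insert t S' := subset_insert _ _
    have hne : (S'.powerset).Nonempty := ⟨∅, mem_powerset.mpr (empty_subset _)⟩
    set Lo : Finset (Fin T) → ℝ := fun A =>
      max (p1 (insert t A) + p2 A - ∑ s ∈ A, u s)
          (∑ s ∈ insert t A, u s - b1 A - b2 (insert t A)) with hLodef
    set α := S'.powerset.sup' hne Lo with hαdef
    -- key feasibility inequalities
    have key : ∀ A ⊆ S', ∀ B ⊆ S', Lo A ≤
        min (∑ s ∈ insert t B, u s - p1 B - p2 (insert t B))
            (b1 (insert t B) + b2 B - ∑ s ∈ B, u s) := by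
      intro A hA B hB
      have htA : t ∉ A := fun h => ht (hA h)
      have htB : t ∉ B := fun h => ht (hB h)
      have hAS : A ⊆ insert t S' := hA.trans hS
      have hBS : B ⊆ insert t S' := hB.trans hS
      have hiA : insert t A ⊆ insert t S' := insert_subset_insert _ hA
      have hiB : insert t B ⊆ insert t S' := insert_subset_insert _ hB
      have hiAB : insert t (A ∪ B) ⊆ insert t S' := insert_subset_insert _ (union_subset hA hB)
      have hABi : A ∩ B ⊆ insert t S' := (inter_subset_left.trans hA).trans hS
      have hdAB : A \ B ⊆ insert t S' := (sdiff_subset.trans hA).trans hS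
      have hdBA : B \ A ⊆ insert t S' := (sdiff_subset.trans hB).trans hS
      have htAB : t ∉ A ∪ B := by simp [htA, htB]
      have hsA : ∑ s ∈ insert t A, u s = u t + ∑ s ∈ A, u s := sum_insert htA
      have hsB : ∑ s ∈ insert t B, u s = u t + ∑ s ∈ B, u s := sum_insert htB
      have hsAB : ∑ s ∈ insert t (A ∪ B), u s = u t + ∑ s ∈ A ∪ B, u s := sum_insert htAB
      have hmod : ∑ s ∈ A ∪ B, u s + ∑ s ∈ A ∩ B, u s = ∑ s ∈ A, u s + ∑ s ∈ B, u s :=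
        sum_union_inter
      have hd1 : ∑ s ∈ A ∩ B, u s + ∑ s ∈ A \ B, u s = ∑ s ∈ A, u s :=
        Finset.sum_inter_add_sum_sdiff A B u
      have hd2 : ∑ s ∈ A ∩ B, u s + ∑ s ∈ B \ A, u s = ∑ s ∈ B, u s := by
        have := Finset.sum_inter_add_sum_sdiff B A u
        rwa [inter_comm] at this
      rw [hLodef]
      refine le_min (max_le ?_ ?_) (max_le ?_ ?_)
      · -- (i): lower vs lower
        have s1 := hsuper1 (insert t A) hiA B hBS
        rw [insert_union, insert_inter_of_notMem htB] at s1
        have s2 := hsuper2 A hAS (insert t B) hiB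
        rw [union_insert, inter_insert_of_notMem htA] at s2
        have hu1 := (hu (insert t (A ∪ B)) hiAB).1
        have hu2 := (hu (A ∩ B) hABi).1
        linarith
      · -- (iii): upper-lower vs lower
        have c1 := hcross1 A hAS B hBS
        have c2 := hcross2 (insert t A) hiA (insert t B) hiB
        rw [ins_sdiff_ins htA, ins_sdiff_ins htB] at c2
        have hu3 := (hu (A \ B) hdAB).2
        have hu4 := (hu (B \ A) hdBA).1
        linarith
      · -- (ii): lower vs upper
        have c1 := hcross1 (insert t B) hiB (insert t A) hiA
        rw [ins_sdiff_ins htB, ins_sdiff_ins htA] at c1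
        have c2 := hcross2 B hBS A hAS
        have hu3 := (hu (B \ A) hdBA).2
        have hu4 := (hu (A \ B) hdAB).1
        linarith
      · -- (iv): upper vs upper
        have s1 := hsub1 A hAS (insert t B) hiB
        rw [union_insert, inter_insert_of_notMem htA] at s1
        have s2 := hsub2 (insert t A) hiA B hBS
        rw [insert_union, insert_inter_of_notMem htB] at s2
        have hu1 := (hu (insert t (A ∪ B)) hiAB).2
        have hu2 := (hu (A ∩ B) hABi).2
        linarith
    have hLoα : ∀ A ⊆ S', Lo A ≤ α := fun A hA =>
      Finset.le_sup' Lo (mem_powerset.mpr hA)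
    have hαHi : ∀ B ⊆ S', α ≤
        min (∑ s ∈ insert t B, u s - p1 B - p2 (insert t B))
            (b1 (insert t B) + b2 B - ∑ s ∈ B, u s) := fun B hB =>
      Finset.sup'_le hne Lo fun A hA => key A (mem_powerset.mp hA) B hB
    have hL1 : ∀ A ⊆ S', p1 (insert t A) + p2 A - ∑ s ∈ A, u s ≤ α := fun A hA =>
      le_trans (le_max_left _ _) (hLoα A hA)
    have hL2 : ∀ A ⊆ S', ∑ s ∈ insert t A, u s - b1 A - b2 (insert t A) ≤ α := fun A hA =>
      le_trans (le_max_right _ _) (hLoα A hA)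
    have hH1 : ∀ B ⊆ S', α ≤ ∑ s ∈ insert t B, u s - p1 B - p2 (insert t B) := fun B hB =>
      le_trans (hαHi B hB) (min_le_left _ _)
    have hH2 : ∀ B ⊆ S', α ≤ b1 (insert t B) + b2 B - ∑ s ∈ B, u s := fun B hB =>
      le_trans (hαHi B hB) (min_le_right _ _)
    have he0 : (∅ : Finset (Fin T)) ⊆ S' := empty_subset _
    have hst : ∑ s ∈ insert t (∅ : Finset (Fin T)), u s = u t := by simp
    have hα1 : p1 (insert t ∅) ≤ α := by
      have h := hL1 ∅ he0; rw [hp20] at h; simpa using h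
    have hα2 : α ≤ b1 (insert t ∅) := by
      have h := hH2 ∅ he0; rw [hb20] at h; simpa using h
    have hβ1 : p2 (insert t ∅) ≤ u t - α := by
      have h := hH1 ∅ he0; rw [hp10, hst] at h; linarith
    have hβ2 : u t - α ≤ b2 (insert t ∅) := by
      have h := hL2 ∅ he0; rw [hb10, hst] at h; linarith
    have hc1 := SPair_contract ht hsp1 hα1 hα2
    have hc2 := SPair_contract ht hsp2 hβ1 hβ2
    -- feasibility of u w.r.t. the contracted pairs
    have hu' : ∀ A ⊆ S',
        (max (p1 A) (p1 (insert t A) - α) + max (p2 A) (p2 (insert t A) - (u t - α))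
          ≤ ∑ s ∈ A, u s) ∧
        (∑ s ∈ A, u s ≤ min (b1 A) (b1 (insert t A) - α)
          + min (b2 A) (b2 (insert t A) - (u t - α))) := by
      intro A hA
      have htA : t ∉ A := fun h => ht (hA h)
      have hAS : A ⊆ insert t S' := hA.trans hS
      have hiA : insert t A ⊆ insert t S' := insert_subset_insert _ hA
      have hsA : ∑ s ∈ insert t A, u s = u t + ∑ s ∈ A, u s := sum_insert htA
      constructor
      · apply max_add_max_le
        · exact (hu A hAS).1
        · have h := hH1 A hA; rw [hsA] at h; linarith
        · have h := hL1 A hA; linarith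
        · have h := (hu (insert t A) hiA).1; rw [hsA] at h; linarith
      · apply le_min_add_min
        · exact (hu A hAS).2
        · have h := hL2 A hA; rw [hsA] at h; linarith
        · have h := hH2 A hA; linarith
        · have h := (hu (insert t A) hiA).2; rw [hsA] at h; linarith
    obtain ⟨v, w, hvw, hv, hw⟩ := IH _ _ _ _ hc1 hc2 u hu'
    refine ⟨Function.update v t α, Function.update w t (u t - α), ?_, ?_, ?_⟩
    · funext s
      by_cases hs : s = t
      · subst hs
        simp [Function.update_self]
      · simp only [Pi.add_apply, Function.update_of_ne hs]
        exact congrFun hvw s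
    · intro A hA
      by_cases htA : t ∈ A
      · have hA' : A.erase t ⊆ S' := by
          rw [← Finset.erase_insert ht]
          exact Finset.erase_subset_erase _ hA
        have htA' : t ∉ A.erase t := Finset.notMem_erase t A
        have hsum : ∑ s ∈ A, Function.update v t α s = α + ∑ s ∈ A.erase t, v s := by
          have h1 : ∑ s ∈ A.erase t, Function.update v t α s = ∑ s ∈ A.erase t, v s :=
            Finset.sum_congr rfl fun s hs =>
              Function.update_of_ne (fun h => htA' (by subst h; exact hs)) _ _
          calc ∑ s ∈ A, Function.update v t α s
              = ∑ s ∈ insert t (A.erase t), Function.update v t α s := by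
                rw [Finset.insert_erase htA]
            _ = α + ∑ s ∈ A.erase t, v s := by
                rw [sum_insert htA', Function.update_self, h1]
        have h1 := (hv (A.erase t) hA').1
        have h2 := (hv (A.erase t) hA').2
        rw [hsum, show p1 A = p1 (insert t (A.erase t)) from by rw [Finset.insert_erase htA],
          show b1 A = b1 (insert t (A.erase t)) from by rw [Finset.insert_erase htA]]
        constructor
        · have := le_max_right (p1 (A.erase t)) (p1 (insert t (A.erase t)) - α)
          linarith
        · have := min_le_right (b1 (A.erase t)) (b1 (insert t (A.erase t)) - α)
          linarith
      · have hA' : A ⊆ S' := (Finset.subset_insert_iff_of_notMem htA).mp hA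
        have hsum : ∑ s ∈ A, Function.update v t α s = ∑ s ∈ A, v s :=
          Finset.sum_congr rfl fun s hs =>
            Function.update_of_ne (fun h => htA (by subst h; exact hs)) _ _
        have h1 := (hv A hA').1
        have h2 := (hv A hA').2
        rw [hsum]
        constructor
        · have := le_max_left (p1 A) (p1 (insert t A) - α)
          linarith
        · have := min_le_left (b1 A) (b1 (insert t A) - α)
          linarith
    · intro A hA
      by_cases htA : t ∈ A
      · have hA' : A.erase t ⊆ S' := by
          rw [← Finset.erase_insert ht]
          exact Finset.erase_subset_erase _ hA
        have htA' : t ∉ A.erase t := Finset.notMem_erase t A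
        have hsum : ∑ s ∈ A, Function.update w t (u t - α) s
            = (u t - α) + ∑ s ∈ A.erase t, w s := by
          have h1 : ∑ s ∈ A.erase t, Function.update w t (u t - α) s = ∑ s ∈ A.erase t, w s :=
            Finset.sum_congr rfl fun s hs =>
              Function.update_of_ne (fun h => htA' (by subst h; exact hs)) _ _
          calc ∑ s ∈ A, Function.update w t (u t - α) s
              = ∑ s ∈ insert t (A.erase t), Function.update w t (u t - α) s := by
                rw [Finset.insert_erase htA]
            _ = (u t - α) + ∑ s ∈ A.erase t, w s := by
                rw [sum_insert htA', Function.update_self, h1]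
        have h1 := (hw (A.erase t) hA').1
        have h2 := (hw (A.erase t) hA').2
        rw [hsum, show p2 A = p2 (insert t (A.erase t)) from by rw [Finset.insert_erase htA],
          show b2 A = b2 (insert t (A.erase t)) from by rw [Finset.insert_erase htA]]
        constructor
        · have := le_max_right (p2 (A.erase t)) (p2 (insert t (A.erase t)) - (u t - α))
          linarith
        · have := min_le_right (b2 (A.erase t)) (b2 (insert t (A.erase t)) - (u t - α))
          linarith
      · have hA' : A ⊆ S' := (Finset.subset_insert_iff_of_notMem htA).mp hA
        have hsum : ∑ s ∈ A, Function.update w t (u t - α) s = ∑ s ∈ A, w s :=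
          Finset.sum_congr rfl fun s hs =>
            Function.update_of_ne (fun h => htA (by subst h; exact hs)) _ _
        have h1 := (hw A hA').1
        have h2 := (hw A hA').2
        rw [hsum]
        constructor
        · have := le_max_left (p2 A) (p2 (insert t A) - (u t - α))
          linarith
        · have := min_le_left (b2 A) (b2 (insert t A) - (u t - α))
          linarith

end Decomp

section SumSection

variable {T : ℕ}

lemma SPair_sum {ι : Type*} (s : Finset ι) (p b : ι → Finset (Fin T) → ℝ)
    (S : Finset (Fin T)) (h : ∀ i ∈ s, SPair S (p i) (b i)) :
    SPair S (fun A => ∑ i ∈ s, p i A) (fun A => ∑ i ∈ s, b i A) := by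
  refine ⟨Finset.sum_eq_zero fun i hi => (h i hi).1,
    Finset.sum_eq_zero fun i hi => (h i hi).2.1, ?_, ?_, ?_⟩
  · intro X hX Y hY
    rw [← Finset.sum_add_distrib, ← Finset.sum_add_distrib]
    exact Finset.sum_le_sum fun i hi => (h i hi).2.2.1 X hX Y hY
  · intro X hX Y hY
    rw [← Finset.sum_add_distrib, ← Finset.sum_add_distrib]
    exact Finset.sum_le_sum fun i hi => (h i hi).2.2.2.1 X hX Y hY
  · intro X hX Y hY
    rw [← Finset.sum_sub_distrib, ← Finset.sum_sub_distrib]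
    exact Finset.sum_le_sum fun i hi => (h i hi).2.2.2.2 X hX Y hY

lemma decomp_sum {ι : Type*} [DecidableEq ι] (p b : ι → Finset (Fin T) → ℝ)
    (h : ∀ i, SPair Finset.univ (p i) (b i)) (s : Finset ι) :
    ∀ u : Fin T → ℝ,
    (∀ A : Finset (Fin T), ∑ i ∈ s, p i A ≤ ∑ x ∈ A, u x ∧ ∑ x ∈ A, u x ≤ ∑ i ∈ s, b i A) →
    ∃ f : ι → Fin T → ℝ,
      (∀ i ∈ s, ∀ A : Finset (Fin T), p i A ≤ ∑ x ∈ A, f i x ∧ ∑ x ∈ A, f i x ≤ b i A) ∧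
      ∑ i ∈ s, f i = u := by
  induction s using Finset.induction_on with
  | empty =>
    intro u hu
    refine ⟨0, by simp, ?_⟩
    have hz : ∀ x, u x = 0 := by
      intro x
      have h1 := (hu {x}).1
      have h2 := (hu {x}).2
      simp only [Finset.sum_empty, Finset.sum_singleton] at h1 h2
      linarith
    simp only [Finset.sum_empty]
    funext x
    exact (hz x).symm
  | @insert i0 s hi0 IH =>
    intro u hu
    have hu' : ∀ A ⊆ (Finset.univ : Finset (Fin T)),
        p i0 A + (∑ i ∈ s, p i A) ≤ ∑ x ∈ A, u x ∧
        ∑ x ∈ A, u x ≤ b i0 A + (∑ i ∈ s, b i A) := by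
      intro A _
      have h1 := (hu A).1
      have h2 := (hu A).2
      rw [Finset.sum_insert hi0] at h1 h2
      exact ⟨h1, h2⟩
    obtain ⟨v, w, hvw, hv, hw⟩ := decomp_two Finset.univ (p i0) (b i0)
      (fun A => ∑ i ∈ s, p i A) (fun A => ∑ i ∈ s, b i A)
      (h i0) (SPair_sum s p b _ fun i _ => h i) u hu'
    obtain ⟨f, hf, hfs⟩ := IH w (fun A => hw A (Finset.subset_univ A))
    refine ⟨Function.update f i0 v, ?_, ?_⟩
    · intro i hi A
      rcases Finset.mem_insert.mp hi with rfl | hi'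
      · rw [Function.update_self]
        exact hv A (Finset.subset_univ A)
      · rw [Function.update_of_ne (fun hh => hi0 (by subst hh; exact hi'))]
        exact hf i hi' A
    · rw [Finset.sum_insert hi0, Function.update_self]
      have hrest : ∑ i ∈ s, Function.update f i0 v i = ∑ i ∈ s, f i :=
        Finset.sum_congr rfl fun i hi =>
          Function.update_of_ne (fun hh => hi0 (by subst hh; exact hi)) _ _
      rw [hrest, hfs]
      exact hvw

end SumSection

/-- The Minkowski sum of generalized polymatroids `Q(p_i, b_i)` equals the
generalized polymatroid `Q(∑ p_i, ∑ b_i)`. -/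
theorem minkowski_sum_gPolymatroids
    (T : ℕ) (hT : 0 < T) (ι : Type*) [Fintype ι] [Nonempty ι]
    (p b : ι → Finset (Fin T) → ℝ)
    (hp0 : ∀ i, p i ∅ = 0) (hb0 : ∀ i, b i ∅ = 0)
    (hsuper : ∀ i, ∀ X Y : Finset (Fin T), p i X + p i Y ≤ p i (X ∪ Y) + p i (X ∩ Y))
    (hsub : ∀ i, ∀ X Y : Finset (Fin T), b i X + b i Y ≥ b i (X ∪ Y) + b i (X ∩ Y))
    (hcross : ∀ i, ∀ X Y : Finset (Fin T), b i X - p i Y ≥ b i (X \ Y) - p i (Y \ X)) :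
    {u : Fin T → ℝ | ∃ f : ι → Fin T → ℝ,
        (∀ i, f i ∈ {v : Fin T → ℝ | ∀ A : Finset (Fin T),
          p i A ≤ ∑ t ∈ A, v t ∧ ∑ t ∈ A, v t ≤ b i A}) ∧ u = ∑ i, f i} =
    {u : Fin T → ℝ | ∀ A : Finset (Fin T),
        ∑ i, p i A ≤ ∑ t ∈ A, u t ∧ ∑ t ∈ A, u t ≤ ∑ i, b i A} := by
  classical
  ext u
  simp only [Set.mem_setOf_eq]
  constructor
  · rintro ⟨f, hf, rfl⟩ A
    have h1 : ∑ t ∈ A, (∑ i, f i) t = ∑ i, ∑ t ∈ A, f i t := by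
      simp only [Finset.sum_apply]
      exact Finset.sum_comm
    rw [h1]
    exact ⟨Finset.sum_le_sum fun i _ => (hf i A).1,
      Finset.sum_le_sum fun i _ => (hf i A).2⟩
  · intro hu
    have hSP : ∀ i, SPair (Finset.univ : Finset (Fin T)) (p i) (b i) := fun i =>
      ⟨hp0 i, hb0 i, fun X _ Y _ => hsuper i X Y, fun X _ Y _ => hsub i X Y,
        fun X _ Y _ => hcross i X Y⟩
    obtain ⟨f, hf, hfs⟩ := decomp_sum p b hSP Finset.univ u (fun A => hu A)
    exact ⟨f, fun i A => hf i (Finset.mem_univ i) A, hfs.symm⟩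
end

section
/- Let T be a positive integer and let I be a nonempty finite index set. For each i ∈ I, let C_i ⊆ Fin T, m_i > 0, and 0 ≤ e_lo_i ≤ e_hi_i ≤ m_i·|C_i|, and define the individual flexibility set F_i := {u : Fin T → ℝ | u t = 0 for t ∉ C_i, 0 ≤ u t ≤ m_i for t ∈ C_i, e_lo_i ≤ ∑_t u t ≤ e_hi_i}, and set functions p_i(A) = max(0, e_lo_i − m_i·(|C_i| − |A ∩ C_i|)) and b_i(A) = min(e_hi_i, m_i·|A ∩ C_i|). Then the Minkowski sum ∑_{i ∈ I} F_i equals {u : Fin T → ℝ | ∑_{i ∈ I} p_i(A) ≤ ∑_{t ∈ A} u t ≤ ∑_{i ∈ I} b_i(A) for all A ⊆ Fin T}. -/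
open Finset

namespace AggFlex

variable {T : ℕ}


/-- Greedy fill: distribute total `e` over `C` in decreasing order of `c`, splitting
evenly within tie classes, with per-coordinate cap `m`. -/
noncomputable def gr (C : Finset (Fin T)) (m e : ℝ) (c : Fin T → ℝ) (t : Fin T) : ℝ :=
  if t ∈ C then
    (min e (m * ((C.filter fun t' => c t ≤ c t').card : ℝ)) -
     min e (m * ((C.filter fun t' => c t < c t').card : ℝ))) /
    ((C.filter fun t' => c t' = c t).card : ℝ)
  else 0

lemma gr_sum (C : Finset (Fin T)) (m e : ℝ) (he0 : 0 ≤ e) (c : Fin T → ℝ) :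
    ∀ B : Finset (Fin T), B ⊆ C → (∀ t ∈ B, ∀ t' ∈ C, c t ≤ c t' → t' ∈ B) →
    ∑ t ∈ B, gr C m e c t = min e (m * (B.card : ℝ)) := by
  intro B
  induction B using Finset.strongInduction with
  | _ B ih =>
    intro hBC hup
    rcases B.eq_empty_or_nonempty with rfl | hBne
    · simp [min_eq_right he0]
    · obtain ⟨t0, ht0B, hmin⟩ := B.exists_min_image c hBne
      set Cl := C.filter (fun t' => c t' = c t0) with hCldef
      have hClB : Cl ⊆ B := by
        intro t' ht'
        rw [hCldef, mem_filter] at ht'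
        exact hup t0 ht0B t' ht'.1 (le_of_eq ht'.2.symm)
      have ht0Cl : t0 ∈ Cl := by
        rw [hCldef, mem_filter]; exact ⟨hBC ht0B, rfl⟩
      set B' := B \ Cl with hB'def
      have hBfil : C.filter (fun t' => c t0 ≤ c t') = B := by
        apply Finset.Subset.antisymm
        · intro t' ht'; rw [mem_filter] at ht'; exact hup t0 ht0B t' ht'.1 ht'.2
        · intro t' ht'; rw [mem_filter]; exact ⟨hBC ht', hmin t' ht'⟩
      have hB'fil : C.filter (fun t' => c t0 < c t') = B' := by
        apply Finset.Subset.antisymm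
        · intro t' ht'; rw [mem_filter] at ht'
          rw [hB'def, mem_sdiff]
          refine ⟨hup t0 ht0B t' ht'.1 ht'.2.le, ?_⟩
          rw [hCldef, mem_filter]
          rintro ⟨-, h⟩; exact absurd h (ne_of_gt ht'.2)
        · intro t' ht'
          rw [hB'def, mem_sdiff] at ht'
          rw [mem_filter]
          refine ⟨hBC ht'.1, lt_of_le_of_ne (hmin t' ht'.1) ?_⟩
          intro h
          exact ht'.2 (by rw [hCldef, mem_filter]; exact ⟨hBC ht'.1, h.symm⟩)
      have hsplit : ∑ t ∈ B', gr C m e c t + ∑ t ∈ Cl, gr C m e c t = ∑ t ∈ B, gr C m e c t :=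
        Finset.sum_sdiff hClB
      have hClsum : ∑ t ∈ Cl, gr C m e c t =
          min e (m * (B.card : ℝ)) - min e (m * (B'.card : ℝ)) := by
        have hgr : ∀ t ∈ Cl, gr C m e c t =
            (min e (m * (B.card : ℝ)) - min e (m * (B'.card : ℝ))) / (Cl.card : ℝ) := by
          intro t ht
          have htC : t ∈ C := by rw [hCldef, mem_filter] at ht; exact ht.1
          have htc : c t = c t0 := by rw [hCldef, mem_filter] at ht; exact ht.2
          have h1 : C.filter (fun t' => c t ≤ c t') = B := by
            rw [← hBfil]; apply filter_congr; intro t' _; rw [htc]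
          have h2 : C.filter (fun t' => c t < c t') = B' := by
            rw [← hB'fil]; apply filter_congr; intro t' _; rw [htc]
          have h3 : C.filter (fun t' => c t' = c t) = Cl := by
            rw [hCldef]; apply filter_congr; intro t' _; rw [htc]
          rw [gr, if_pos htC, h1, h2, h3]
        rw [Finset.sum_congr rfl hgr, Finset.sum_const, nsmul_eq_mul]
        have hClpos : (0:ℝ) < (Cl.card : ℝ) := by
          have : Cl.Nonempty := ⟨t0, ht0Cl⟩
          exact_mod_cast Finset.card_pos.mpr this
        field_simp
      have hB'B : B' ⊂ B := by
        rw [hB'def]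
        exact Finset.sdiff_ssubset hClB ⟨t0, ht0Cl⟩
      have hB'C : B' ⊆ C := (Finset.sdiff_subset).trans hBC
      have hup' : ∀ t ∈ B', ∀ t' ∈ C, c t ≤ c t' → t' ∈ B' := by
        intro t ht t' ht'C hle
        rw [← hB'fil, mem_filter]
        have : c t0 < c t := by rw [← hB'fil, mem_filter] at ht; exact ht.2
        exact ⟨ht'C, lt_of_lt_of_le this hle⟩
      have hIH : ∑ t ∈ B', gr C m e c t = min e (m * (B'.card : ℝ)) := ih B' hB'B hB'C hup'
      linarith [hsplit, hClsum, hIH]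


lemma min_sub_min_le {e x y : ℝ} (h : y ≤ x) : min e x - min e y ≤ x - y := by
  rcases le_total e y with h1 | h1
  · rw [min_eq_left h1, min_eq_left (h1.trans h)]; linarith
  · rw [min_eq_right h1]; have := min_le_right e x; linarith [min_le_left e x]

lemma card_filter_le_eq {C : Finset (Fin T)} (c : Fin T → ℝ) (t : Fin T) :
    (C.filter fun t' => c t ≤ c t').card =
    (C.filter fun t' => c t < c t').card + (C.filter fun t' => c t' = c t).card := by
  have h1 : (C.filter fun t' => c t ≤ c t') =
      (C.filter fun t' => c t < c t') ∪ (C.filter fun t' => c t' = c t) := by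
    rw [← Finset.filter_or]
    apply filter_congr
    intro t' _
    constructor
    · intro h; rcases lt_or_eq_of_le h with h | h
      · exact Or.inl h
      · exact Or.inr (by simp [h.symm])
    · rintro (h | h); exact h.le; exact (le_of_eq h.symm)
  rw [h1, Finset.card_union_of_disjoint]
  rw [Finset.disjoint_filter]
  intro t' _ hlt heq
  exact absurd heq (ne_of_gt hlt)

lemma gr_bounds (C : Finset (Fin T)) (m e : ℝ) (hm : 0 < m) (he0 : 0 ≤ e) (c : Fin T → ℝ)
    (t : Fin T) (ht : t ∈ C) : 0 ≤ gr C m e c t ∧ gr C m e c t ≤ m := by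
  have hcard := card_filter_le_eq (C := C) c t
  set k2 := (C.filter fun t' => c t ≤ c t').card
  set k1 := (C.filter fun t' => c t < c t').card
  set L := (C.filter fun t' => c t' = c t).card
  have hLpos : 0 < L := Finset.card_pos.mpr ⟨t, mem_filter.mpr ⟨ht, rfl⟩⟩
  have hLpos' : (0:ℝ) < (L:ℝ) := by exact_mod_cast hLpos
  have hk12 : (k1:ℝ) ≤ (k2:ℝ) := by
    have : k1 ≤ k2 := by omega
    exact_mod_cast this
  have hmono : min e (m * (k1:ℝ)) ≤ min e (m * (k2:ℝ)) :=
    min_le_min le_rfl (mul_le_mul_of_nonneg_left hk12 hm.le)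
  have hsub : min e (m * (k2:ℝ)) - min e (m * (k1:ℝ)) ≤ m * (L:ℝ) := by
    have h1 : min e (m * (k2:ℝ)) - min e (m * (k1:ℝ)) ≤ m * (k2:ℝ) - m * (k1:ℝ) := by
      rcases le_total e (m * (k1:ℝ)) with h | h
      · rw [min_eq_left h, min_eq_left (h.trans (mul_le_mul_of_nonneg_left hk12 hm.le))]
        have := mul_le_mul_of_nonneg_left hk12 hm.le; linarith
      · rw [min_eq_right h]; have := min_le_right e (m * (k2:ℝ)); linarith [min_le_left e (m * (k2:ℝ))]
    have h2 : m * (k2:ℝ) - m * (k1:ℝ) = m * (L:ℝ) := by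
      have : (k2:ℝ) = (k1:ℝ) + (L:ℝ) := by exact_mod_cast hcard
      rw [this]; ring
    linarith
  rw [gr, if_pos ht]
  constructor
  · exact div_nonneg (by linarith) hLpos'.le
  · rw [div_le_iff₀ hLpos']
    calc min e (m * (k2:ℝ)) - min e (m * (k1:ℝ)) ≤ m * (L:ℝ) := hsub
    _ = m * (L:ℝ) := rfl

lemma exists_tight (C : Finset (Fin T)) (m l s : ℝ) (hm : 0 < m) (hl0 : 0 ≤ l)
    (hls : l ≤ s) (hsC : s ≤ m * (C.card : ℝ)) (c : Fin T → ℝ) :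
    ∃ f : Fin T → ℝ,
      (∀ t ∉ C, f t = 0) ∧ (∀ t ∈ C, 0 ≤ f t ∧ f t ≤ m) ∧
      l ≤ ∑ t, f t ∧ (∑ t, f t) ≤ s ∧
      (∀ lam : ℝ, 0 < lam →
        ∑ t ∈ univ.filter (fun t => lam ≤ c t), f t
          = min s (m * ((((univ.filter (fun t => lam ≤ c t)) ∩ C).card : ℝ)))) ∧
      (∀ lam : ℝ, lam < 0 →
        ∑ t ∈ univ.filter (fun t => c t ≤ lam), f t
          = max 0 (l - m * ((C.card : ℝ) - (((univ.filter (fun t => c t ≤ lam)) ∩ C).card : ℝ)))) := by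
  classical
  set P := C.filter (fun t => 0 < c t) with hPdef
  set estar := max l (min s (m * (P.card : ℝ))) with hedef
  have he0 : 0 ≤ estar := hl0.trans (le_max_left _ _)
  have hes : estar ≤ s := max_le hls (min_le_left _ _)
  have hel : l ≤ estar := le_max_left _ _
  set f := gr C m estar c with hfdef
  have hfzero : ∀ t ∉ C, f t = 0 := by intro t ht; rw [hfdef, gr, if_neg ht]
  have hfB : ∀ t ∈ C, 0 ≤ f t ∧ f t ≤ m := fun t ht => gr_bounds C m estar hm he0 c t ht
  have hsum_inter : ∀ A : Finset (Fin T), ∑ t ∈ A, f t = ∑ t ∈ A ∩ C, f t := by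
    intro A
    refine (Finset.sum_subset (Finset.inter_subset_left) ?_).symm
    intro t htA htn
    exact hfzero t (fun htC => htn (Finset.mem_inter.mpr ⟨htA, htC⟩))
  have huniv_inter : Finset.univ ∩ C = C := by simp
  have htotal : ∑ t, f t = estar := by
    rw [hsum_inter, huniv_inter,
      gr_sum C m estar he0 c C (Finset.Subset.refl C) (fun t _ t' ht' _ => ht')]
    exact min_eq_left (hes.trans hsC)
  refine ⟨f, hfzero, hfB, ?_, ?_, ?_, ?_⟩
  · rw [htotal]; exact hel
  · rw [htotal]; exact hes
  · -- positive tightness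
    intro lam hlam
    have hinter : (univ.filter (fun t => lam ≤ c t)) ∩ C = C.filter (fun t => lam ≤ c t) := by
      ext t; simp [Finset.mem_filter, Finset.mem_inter, and_comm]
    rw [hsum_inter, hinter]
    have hup : ∀ t ∈ C.filter (fun t => lam ≤ c t), ∀ t' ∈ C, c t ≤ c t' →
        t' ∈ C.filter (fun t => lam ≤ c t) := by
      intro t ht t' ht'C hle
      rw [mem_filter] at ht ⊢
      exact ⟨ht'C, ht.2.trans hle⟩
    rw [gr_sum C m estar he0 c _ (Finset.filter_subset _ _) hup]
    -- min estar (m k) = min s (m k) for k ≤ |P|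
    have hsubP : C.filter (fun t => lam ≤ c t) ⊆ P := by
      intro t ht; rw [mem_filter] at ht ⊢
      exact ⟨ht.1, hlam.trans_le ht.2⟩
    have hk : ((C.filter (fun t => lam ≤ c t)).card : ℝ) ≤ (P.card : ℝ) := by
      exact_mod_cast Finset.card_le_card hsubP
    have hmk : m * ((C.filter (fun t => lam ≤ c t)).card : ℝ) ≤ m * (P.card : ℝ) :=
      mul_le_mul_of_nonneg_left hk hm.le
    rw [hedef]
    simp only [min_def, max_def]
    split_ifs <;> linarith
  · -- negative tightness
    intro lam hlam
    have hinter : (univ.filter (fun t => c t ≤ lam)) ∩ C = C.filter (fun t => c t ≤ lam) := by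
      ext t; simp [Finset.mem_filter, Finset.mem_inter, and_comm]
    rw [hsum_inter, hinter]
    set B := C.filter (fun t => lam < c t) with hBdef
    have hcompl : ∑ t ∈ C.filter (fun t => c t ≤ lam), f t + ∑ t ∈ B, f t = ∑ t ∈ C, f t := by
      rw [hBdef]
      have : C.filter (fun t => lam < c t) = C.filter (fun t => ¬ c t ≤ lam) := by
        apply filter_congr; intro t _; simp [not_le]
      rw [this]
      exact Finset.sum_filter_add_sum_filter_not C _ f
    have hCtot : ∑ t ∈ C, f t = estar := by
      rw [gr_sum C m estar he0 c C (Finset.Subset.refl C) (fun t _ t' ht' _ => ht')]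
      exact min_eq_left (hes.trans hsC)
    have hup : ∀ t ∈ B, ∀ t' ∈ C, c t ≤ c t' → t' ∈ B := by
      intro t ht t' ht'C hle
      rw [hBdef, mem_filter] at ht ⊢
      exact ⟨ht'C, ht.2.trans_le hle⟩
    have hBsum : ∑ t ∈ B, f t = min estar (m * (B.card : ℝ)) :=
      gr_sum C m estar he0 c B (Finset.filter_subset _ _) hup
    have hPB : P ⊆ B := by
      intro t ht; rw [hPdef, mem_filter] at ht; rw [hBdef, mem_filter]
      exact ⟨ht.1, hlam.trans ht.2⟩
    have hPk : m * (P.card : ℝ) ≤ m * (B.card : ℝ) := by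
      apply mul_le_mul_of_nonneg_left _ hm.le
      exact_mod_cast Finset.card_le_card hPB
    have hcardeq : ((C.filter (fun t => c t ≤ lam)).card : ℝ) + (B.card : ℝ) = (C.card : ℝ) := by
      have : (C.filter (fun t => c t ≤ lam)).card + (C.filter (fun t => ¬ c t ≤ lam)).card = C.card :=
        Finset.card_filter_add_card_filter_not _
      have hB2 : C.filter (fun t => lam < c t) = C.filter (fun t => ¬ c t ≤ lam) := by
        apply filter_congr; intro t _; simp [not_le]
      rw [hBdef, hB2]
      exact_mod_cast this
    have hgoal : ∑ t ∈ C.filter (fun t => c t ≤ lam), f t = estar - min estar (m * (B.card : ℝ)) := by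
      rw [← hBsum]; linarith [hcompl, hCtot]
    rw [hgoal]
    have : (C.card : ℝ) - ((C.filter (fun t => c t ≤ lam)).card : ℝ) = (B.card : ℝ) := by
      linarith
    rw [this, hedef]
    simp only [min_def, max_def]
    split_ifs <;> linarith


/-- positive values of `c` -/
noncomputable def V (c : Fin T → ℝ) : Finset ℝ := (Finset.univ.image c).filter fun v => 0 < v

/-- previous positive value (or 0) below `lam` -/
noncomputable def pv (c : Fin T → ℝ) (lam : ℝ) : ℝ :=
  (insert (0:ℝ) ((V c).filter fun v => v < lam)).max' (Finset.insert_nonempty _ _)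

noncomputable def w (c : Fin T → ℝ) (lam : ℝ) : ℝ := lam - pv c lam

/-- upper level set -/
noncomputable def AS (c : Fin T → ℝ) (lam : ℝ) : Finset (Fin T) := Finset.univ.filter fun t => lam ≤ c t

lemma pv_nonneg (c : Fin T → ℝ) (lam : ℝ) : 0 ≤ pv c lam :=
  Finset.le_max' _ _ (Finset.mem_insert_self _ _)

lemma pv_lt (c : Fin T → ℝ) {lam : ℝ} (h : 0 < lam) : pv c lam < lam := by
  rw [pv]
  apply Finset.max'_lt_iff _ _ |>.mpr
  intro y hy
  rcases Finset.mem_insert.mp hy with rfl | hy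
  · exact h
  · exact (Finset.mem_filter.mp hy).2

lemma pv_mem (c : Fin T → ℝ) (lam : ℝ) : pv c lam = 0 ∨ pv c lam ∈ V c := by
  have := Finset.max'_mem (insert (0:ℝ) ((V c).filter fun v => v < lam))
    (Finset.insert_nonempty _ _)
  rcases Finset.mem_insert.mp this with h | h
  · exact Or.inl h
  · exact Or.inr (Finset.mem_filter.mp h).1

lemma le_pv (c : Fin T → ℝ) {v lam : ℝ} (hv : v ∈ V c) (hvl : v < lam) : v ≤ pv c lam := by
  rw [pv]
  apply Finset.le_max'
  apply Finset.mem_insert_of_mem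
  rw [Finset.mem_filter]
  exact ⟨hv, hvl⟩

lemma w_pos (c : Fin T → ℝ) {lam : ℝ} (h : lam ∈ V c) : 0 < w c lam := by
  have : 0 < lam := (Finset.mem_filter.mp h).2
  rw [w]; linarith [pv_lt c this]

lemma telescope (c : Fin T → ℝ) :
    ∀ n : ℕ, ∀ mu : ℝ, ((V c).filter fun v => v ≤ mu).card ≤ n → (mu = 0 ∨ mu ∈ V c) →
    ∑ lam ∈ (V c).filter (fun v => v ≤ mu), w c lam = mu := by
  intro n
  induction n with
  | zero =>
    intro mu hcard hmu
    rcases hmu with rfl | hmu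
    · apply Finset.sum_eq_zero_iff_of_nonneg ?_ |>.mpr ?_ |>.trans rfl
      · intro lam hlam; exact (w_pos c (Finset.mem_filter.mp hlam).1).le
      · intro lam hlam
        exfalso
        have h0 : 0 < lam := (Finset.mem_filter.mp (Finset.mem_filter.mp hlam).1).2
        have := (Finset.mem_filter.mp hlam).2
        linarith
    · exfalso
      have : mu ∈ (V c).filter fun v => v ≤ mu := Finset.mem_filter.mpr ⟨hmu, le_rfl⟩
      have := Finset.card_pos.mpr ⟨mu, this⟩
      omega
  | succ n ih =>
    intro mu hcard hmu
    rcases hmu with rfl | hmu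
    · -- same as before : the filter is empty
      apply Finset.sum_eq_zero
      intro lam hlam
      exfalso
      have h0 : 0 < lam := (Finset.mem_filter.mp (Finset.mem_filter.mp hlam).1).2
      have := (Finset.mem_filter.mp hlam).2
      linarith
    · have hmu0 : 0 < mu := (Finset.mem_filter.mp hmu).2
      have hsplit : (V c).filter (fun v => v ≤ mu) =
          insert mu ((V c).filter (fun v => v ≤ pv c mu)) := by
        ext v
        simp only [Finset.mem_filter, Finset.mem_insert]
        constructor
        · rintro ⟨hv, hvmu⟩
          rcases eq_or_lt_of_le hvmu with h | h
          · exact Or.inl h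
          · exact Or.inr ⟨hv, le_pv c hv h⟩
        · rintro (rfl | ⟨hv, hvp⟩)
          · exact ⟨hmu, le_rfl⟩
          · exact ⟨hv, hvp.trans (pv_lt c hmu0).le⟩
      have hnotmem : mu ∉ (V c).filter (fun v => v ≤ pv c mu) := by
        intro h
        have := (Finset.mem_filter.mp h).2
        linarith [pv_lt c hmu0]
      have hcard' : ((V c).filter fun v => v ≤ pv c mu).card ≤ n := by
        have h1 : ((V c).filter fun v => v ≤ mu).card
            = ((V c).filter fun v => v ≤ pv c mu).card + 1 := by
          rw [hsplit, Finset.card_insert_of_notMem hnotmem]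
        omega
      rw [hsplit, Finset.sum_insert hnotmem, ih (pv c mu) hcard' (pv_mem c mu)]
      rw [w]; ring

lemma pos_decomp (c x : Fin T → ℝ) :
    ∑ t, max 0 (c t) * x t = ∑ lam ∈ V c, w c lam * ∑ t ∈ AS c lam, x t := by
  have step1 : ∀ lam, w c lam * ∑ t ∈ AS c lam, x t
      = ∑ t, (if lam ≤ c t then w c lam * x t else 0) := by
    intro lam
    rw [AS, Finset.mul_sum, Finset.sum_filter]
  rw [Finset.sum_congr rfl (fun lam _ => step1 lam), Finset.sum_comm]
  apply Finset.sum_congr rfl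
  intro t _
  have step2 : ∑ lam ∈ V c, (if lam ≤ c t then w c lam * x t else 0)
      = (∑ lam ∈ (V c).filter (fun v => v ≤ c t), w c lam) * x t := by
    rw [← Finset.sum_filter, Finset.sum_mul]
  rw [step2]
  rcases lt_or_ge 0 (c t) with hct | hct
  · have hmem : c t ∈ V c := Finset.mem_filter.mpr ⟨Finset.mem_image_of_mem c (Finset.mem_univ t), hct⟩
    rw [telescope c (((V c).filter fun v => v ≤ c t).card) (c t) le_rfl (Or.inr hmem)]
    rw [max_eq_right hct.le]
  · have hempty : (V c).filter (fun v => v ≤ c t) = ∅ := by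
      apply Finset.filter_eq_empty_iff.mpr
      intro v hv hle
      have : 0 < v := (Finset.mem_filter.mp hv).2
      linarith
    rw [hempty, Finset.sum_empty, zero_mul, max_eq_left hct, zero_mul]

lemma V_pos {c : Fin T → ℝ} {lam : ℝ} (h : lam ∈ V c) : 0 < lam := (Finset.mem_filter.mp h).2

/-- Individual flexibility membership implies the per-set bounds. -/
lemma sumA_bounds (C : Finset (Fin T)) (m l s : ℝ) (f : Fin T → ℝ)
    (h0 : ∀ t ∉ C, f t = 0) (hB : ∀ t ∈ C, 0 ≤ f t ∧ f t ≤ m)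
    (hl : l ≤ ∑ t, f t) (hs : ∑ t, f t ≤ s) (A : Finset (Fin T)) :
    max 0 (l - m * ((C.card : ℝ) - ((A ∩ C).card : ℝ))) ≤ ∑ t ∈ A, f t ∧
    ∑ t ∈ A, f t ≤ min s (m * ((A ∩ C).card : ℝ)) := by
  classical
  have hnn : ∀ t, 0 ≤ f t := by
    intro t
    by_cases h : t ∈ C
    · exact (hB t h).1
    · exact le_of_eq (h0 t h).symm
  have hsubsum : ∀ B : Finset (Fin T), ∑ t ∈ B, f t = ∑ t ∈ B ∩ C, f t := by
    intro B
    refine (Finset.sum_subset Finset.inter_subset_left ?_).symm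
    intro t htB htn
    exact h0 t fun htC => htn (Finset.mem_inter.mpr ⟨htB, htC⟩)
  have hboundB : ∀ B : Finset (Fin T), ∑ t ∈ B, f t ≤ m * ((B ∩ C).card : ℝ) := by
    intro B
    rw [hsubsum B]
    calc ∑ t ∈ B ∩ C, f t ≤ ∑ _t ∈ B ∩ C, m :=
          Finset.sum_le_sum fun t ht => (hB t (Finset.mem_inter.mp ht).2).2
    _ = ((B ∩ C).card : ℝ) * m := by rw [Finset.sum_const, nsmul_eq_mul]
    _ = m * ((B ∩ C).card : ℝ) := mul_comm _ _
  constructor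
  · apply max_le
    · exact Finset.sum_nonneg fun t _ => hnn t
    · have hsplit : ∑ t ∈ Finset.univ \ A, f t + ∑ t ∈ A, f t = ∑ t, f t :=
        Finset.sum_sdiff (Finset.subset_univ A)
      have hbound := hboundB (Finset.univ \ A)
      have hcards : ((Finset.univ \ A) ∩ C) = C \ A := by
        ext t; simp [Finset.mem_sdiff, Finset.mem_inter, and_comm]
      have hcard2 : (C \ A).card + (A ∩ C).card = C.card := by
        rw [Finset.inter_comm]
        exact Finset.card_sdiff_add_card_inter C A
      have hcard3 : (((Finset.univ \ A) ∩ C).card : ℝ) = (C.card : ℝ) - ((A ∩ C).card : ℝ) := by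
        rw [hcards]
        have : ((C \ A).card : ℝ) + ((A ∩ C).card : ℝ) = (C.card : ℝ) := by exact_mod_cast hcard2
        linarith
      rw [hcard3] at hbound
      linarith
  · apply le_min
    · calc ∑ t ∈ A, f t ≤ ∑ t, f t :=
        Finset.sum_le_sum_of_subset_of_nonneg (Finset.subset_univ A) fun t _ _ => hnn t
      _ ≤ s := hs
    · exact hboundB A

lemma maxsub (a : ℝ) : max 0 a - max 0 (-a) = a := by
  rcases le_total 0 a with h | h
  · rw [max_eq_right h, max_eq_left (by linarith : -a ≤ 0)]; ring
  · rw [max_eq_left h, max_eq_right (by linarith : 0 ≤ -a)]; ring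

/-- signed decomposition of a linear functional over level sets -/
lemma signed_decomp (c x : Fin T → ℝ) :
    ∑ t, c t * x t = (∑ lam ∈ V c, w c lam * ∑ t ∈ AS c lam, x t)
      - ∑ lam ∈ V (fun t => -c t), w (fun t => -c t) lam * ∑ t ∈ AS (fun t => -c t) lam, x t := by
  rw [← pos_decomp c x, ← pos_decomp (fun t => -c t) x, ← Finset.sum_sub_distrib]
  apply Finset.sum_congr rfl
  intro t _
  calc c t * x t = (max 0 (c t) - max 0 (-c t)) * x t := by rw [maxsub]
  _ = max 0 (c t) * x t - max 0 (-c t) * x t := by ring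

end AggFlex

open AggFlex in
/-- The aggregate flexibility set (Minkowski sum of the individual
flexibility sets of a population of EVs) equals the generalized polymatroid generated by
the sums of the individual set functions. -/
theorem aggregate_flexibility_eq_gPolymatroid
    (T : ℕ) (hT : 0 < T) (ι : Type*) [Fintype ι] [Nonempty ι]
    (C : ι → Finset (Fin T)) (m : ι → ℝ) (hm : ∀ i, 0 < m i)
    (e_lo e_hi : ι → ℝ) (he0 : ∀ i, 0 ≤ e_lo i) (hee : ∀ i, e_lo i ≤ e_hi i)
    (he2 : ∀ i, e_hi i ≤ m i * ((C i).card : ℝ))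
    (F : ι → Set (Fin T → ℝ))
    (hF : ∀ i, F i = {u : Fin T → ℝ |
        (∀ t ∉ C i, u t = 0) ∧ (∀ t ∈ C i, 0 ≤ u t ∧ u t ≤ m i) ∧
        e_lo i ≤ ∑ t, u t ∧ ∑ t, u t ≤ e_hi i})
    (p b : ι → Finset (Fin T) → ℝ)
    (hp : ∀ i A, p i A = max 0 (e_lo i - m i * (((C i).card : ℝ) - ((A ∩ C i).card : ℝ))))
    (hb : ∀ i A, b i A = min (e_hi i) (m i * ((A ∩ C i).card : ℝ))) :
    {u : Fin T → ℝ | ∃ f : ι → Fin T → ℝ, (∀ i, f i ∈ F i) ∧ u = ∑ i, f i} =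
    {u : Fin T → ℝ | ∀ A : Finset (Fin T),
        ∑ i, p i A ≤ ∑ t ∈ A, u t ∧ ∑ t ∈ A, u t ≤ ∑ i, b i A} := by
  classical
  apply Set.Subset.antisymm
  · -- easy direction
    rintro u ⟨f, hfF, rfl⟩
    intro A
    have hfi : ∀ i, (∀ t ∉ C i, f i t = 0) ∧ (∀ t ∈ C i, 0 ≤ f i t ∧ f i t ≤ m i) ∧
        e_lo i ≤ ∑ t, f i t ∧ ∑ t, f i t ≤ e_hi i := by
      intro i; have := hfF i; rwa [hF i] at this
    have hswap : ∑ t ∈ A, (∑ i, f i) t = ∑ i, ∑ t ∈ A, f i t := by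
      rw [Finset.sum_congr rfl fun t _ => Finset.sum_apply t Finset.univ f]
      exact Finset.sum_comm
    constructor
    · rw [hswap]
      apply Finset.sum_le_sum
      intro i _
      rw [hp]
      exact (sumA_bounds (C i) (m i) (e_lo i) (e_hi i) (f i) (hfi i).1 (hfi i).2.1
        (hfi i).2.2.1 (hfi i).2.2.2 A).1
    · rw [hswap]
      apply Finset.sum_le_sum
      intro i _
      rw [hb]
      exact (sumA_bounds (C i) (m i) (e_lo i) (e_hi i) (f i) (hfi i).1 (hfi i).2.1
        (hfi i).2.2.1 (hfi i).2.2.2 A).2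
  · -- hard direction
    intro u hu
    rw [Set.mem_setOf_eq] at hu
    by_contra hu'
    -- the aggregate set is compact and convex
    set Sset : Set (Fin T → ℝ) :=
      {v : Fin T → ℝ | ∃ f : ι → Fin T → ℝ, (∀ i, f i ∈ F i) ∧ v = ∑ i, f i} with hSdef
    have hFc : ∀ i, IsCompact (F i) := by
      intro i
      rw [hF i]
      apply Metric.isCompact_of_isClosed_isBounded
      · have h1 : IsClosed {v : Fin T → ℝ | ∀ t ∉ C i, v t = 0} := by
          have : {v : Fin T → ℝ | ∀ t ∉ C i, v t = 0} =
              ⋂ (t : Fin T) (_ : t ∉ C i), {v : Fin T → ℝ | v t = 0} := by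
            ext v; simp
          rw [this]
          exact isClosed_iInter fun t => isClosed_iInter fun _ =>
            isClosed_eq (continuous_apply t) continuous_const
        have h2 : IsClosed {v : Fin T → ℝ | ∀ t ∈ C i, 0 ≤ v t ∧ v t ≤ m i} := by
          have : {v : Fin T → ℝ | ∀ t ∈ C i, 0 ≤ v t ∧ v t ≤ m i} =
              ⋂ (t : Fin T) (_ : t ∈ C i), {v : Fin T → ℝ | 0 ≤ v t ∧ v t ≤ m i} := by
            ext v; simp
          rw [this]
          exact isClosed_iInter fun t => isClosed_iInter fun _ =>
            (isClosed_le continuous_const (continuous_apply t)).inter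
              (isClosed_le (continuous_apply t) continuous_const)
        have hsum_cont : Continuous (fun v : Fin T → ℝ => ∑ t, v t) :=
          continuous_finset_sum _ fun t _ => continuous_apply t
        have h3 : IsClosed {v : Fin T → ℝ | e_lo i ≤ ∑ t, v t ∧ ∑ t, v t ≤ e_hi i} :=
          (isClosed_le continuous_const hsum_cont).inter
            (isClosed_le hsum_cont continuous_const)
        exact h1.inter (h2.inter h3)
      · rw [isBounded_iff_forall_norm_le]
        refine ⟨m i, ?_⟩
        rintro v ⟨hv0, hvB, -⟩
        rw [pi_norm_le_iff_of_nonneg (hm i).le]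
        intro t
        rw [Real.norm_eq_abs, abs_le]
        by_cases h : t ∈ C i
        · exact ⟨by linarith [(hvB t h).1, (hm i).le], (hvB t h).2⟩
        · rw [hv0 t h]; exact ⟨by linarith [(hm i).le], (hm i).le⟩
    have hScompact : IsCompact Sset := by
      have himg : Sset = (fun g : ι → Fin T → ℝ => ∑ i, g i) '' (Set.univ.pi F) := by
        ext v
        constructor
        · rintro ⟨f, hf, rfl⟩
          exact ⟨f, fun i _ => hf i, rfl⟩
        · rintro ⟨f, hf, rfl⟩
          exact ⟨f, fun i => hf i (Set.mem_univ i), rfl⟩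
      rw [himg]
      exact (isCompact_univ_pi hFc).image (continuous_finset_sum _ fun i _ => continuous_apply i)
    have hSconvex : Convex ℝ Sset := by
      rintro x ⟨fx, hfx, rfl⟩ y ⟨fy, hfy, rfl⟩ a c ha hc hac
      refine ⟨fun i => a • fx i + c • fy i, fun i => ?_, ?_⟩
      · show a • fx i + c • fy i ∈ F i
        have hx := hfx i; have hy := hfy i
        rw [hF i] at hx hy ⊢
        obtain ⟨hx0, hxB, hxl, hxs⟩ := hx
        obtain ⟨hy0, hyB, hyl, hys⟩ := hy
        have hsum : ∑ t, (a • fx i + c • fy i) t = a * ∑ t, fx i t + c * ∑ t, fy i t := by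
          simp only [Pi.add_apply, Pi.smul_apply, smul_eq_mul]
          rw [Finset.sum_add_distrib, ← Finset.mul_sum, ← Finset.mul_sum]
        refine ⟨?_, ?_, ?_, ?_⟩
        · intro t ht
          simp only [Pi.add_apply, Pi.smul_apply, smul_eq_mul]
          rw [hx0 t ht, hy0 t ht]; ring
        · intro t ht
          simp only [Pi.add_apply, Pi.smul_apply, smul_eq_mul]
          have h1 := mul_le_mul_of_nonneg_left (hxB t ht).2 ha
          have h2 := mul_le_mul_of_nonneg_left (hyB t ht).2 hc
          have h3 : a * m i + c * m i = m i := by rw [← add_mul, hac, one_mul]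
          exact ⟨add_nonneg (mul_nonneg ha (hxB t ht).1) (mul_nonneg hc (hyB t ht).1),
            by linarith⟩
        · rw [hsum]
          have h1 := mul_le_mul_of_nonneg_left hxl ha
          have h2 := mul_le_mul_of_nonneg_left hyl hc
          have h3 : a * e_lo i + c * e_lo i = e_lo i := by rw [← add_mul, hac, one_mul]
          linarith
        · rw [hsum]
          have h1 := mul_le_mul_of_nonneg_left hxs ha
          have h2 := mul_le_mul_of_nonneg_left hys hc
          have h3 : a * e_hi i + c * e_hi i = e_hi i := by rw [← add_mul, hac, one_mul]
          linarith
      · show a • ∑ i, fx i + c • ∑ i, fy i = _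
        rw [Finset.smul_sum, Finset.smul_sum, ← Finset.sum_add_distrib]
    -- separation
    obtain ⟨φ, r, hφ1, hφ2⟩ :=
      geometric_hahn_banach_closed_point hSconvex hScompact.isClosed hu'
    set c : Fin T → ℝ := fun t => φ (Pi.single t 1) with hcdef
    have hφeval : ∀ x : Fin T → ℝ, φ x = ∑ t, c t * x t := by
      intro x
      have hx : x = ∑ t, x t • (Pi.single t (1:ℝ) : Fin T → ℝ) := by
        funext t'
        rw [Finset.sum_apply]
        simp [Pi.single_apply]
      conv_lhs => rw [hx]
      rw [map_sum]
      apply Finset.sum_congr rfl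
      intro t _
      rw [map_smul, smul_eq_mul, hcdef, mul_comm]
    -- greedy witnesses
    have hwit : ∀ i : ι, ∃ f : Fin T → ℝ,
        (∀ t ∉ C i, f t = 0) ∧ (∀ t ∈ C i, 0 ≤ f t ∧ f t ≤ m i) ∧
        e_lo i ≤ ∑ t, f t ∧ (∑ t, f t) ≤ e_hi i ∧
        (∀ lam : ℝ, 0 < lam →
          ∑ t ∈ univ.filter (fun t => lam ≤ c t), f t
            = min (e_hi i) (m i * ((((univ.filter (fun t => lam ≤ c t)) ∩ C i).card : ℝ)))) ∧
        (∀ lam : ℝ, lam < 0 →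
          ∑ t ∈ univ.filter (fun t => c t ≤ lam), f t
            = max 0 (e_lo i - m i * (((C i).card : ℝ) -
                (((univ.filter (fun t => c t ≤ lam)) ∩ C i).card : ℝ)))) :=
      fun i => exists_tight (C i) (m i) (e_lo i) (e_hi i) (hm i) (he0 i) (hee i) (he2 i) c
    choose f hf0 hfB hfl hfs hfpos hfneg using hwit
    have hfF : ∀ i, f i ∈ F i := by
      intro i; rw [hF i]; exact ⟨hf0 i, hfB i, hfl i, hfs i⟩
    have hs0S : (∑ i, f i) ∈ Sset := ⟨f, hfF, rfl⟩
    -- key inequality : φ u ≤ φ (∑ i, f i)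
    have hkey : ∑ t, c t * u t ≤ ∑ t, c t * (∑ i, f i) t := by
      have hsumf : ∀ A : Finset (Fin T), ∑ t ∈ A, (∑ i, f i) t = ∑ i, ∑ t ∈ A, f i t := by
        intro A
        rw [Finset.sum_congr rfl fun t _ => Finset.sum_apply t Finset.univ f]
        exact Finset.sum_comm
      rw [signed_decomp c u, signed_decomp c (∑ i, f i)]
      apply sub_le_sub
      · apply Finset.sum_le_sum
        intro lam hlam
        have hlam0 : 0 < lam := V_pos hlam
        apply mul_le_mul_of_nonneg_left _ (w_pos c hlam).le
        rw [hsumf, AS]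
        calc ∑ t ∈ univ.filter (fun t => lam ≤ c t), u t
            ≤ ∑ i, b i (univ.filter (fun t => lam ≤ c t)) := (hu _).2
          _ = ∑ i, ∑ t ∈ univ.filter (fun t => lam ≤ c t), f i t := by
              apply Finset.sum_congr rfl
              intro i _
              rw [hb, hfpos i lam hlam0]
      · apply Finset.sum_le_sum
        intro lam hlam
        have hlam0 : 0 < lam := V_pos hlam
        apply mul_le_mul_of_nonneg_left _ (w_pos _ hlam).le
        have hsetEq : AS (fun t => -c t) lam = univ.filter (fun t => c t ≤ -lam) := by
          rw [AS]
          apply Finset.filter_congr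
          intro t _
          simp [le_neg]
        rw [hsetEq, hsumf]
        calc ∑ i, ∑ t ∈ univ.filter (fun t => c t ≤ -lam), f i t
            = ∑ i, p i (univ.filter (fun t => c t ≤ -lam)) := by
              apply Finset.sum_congr rfl
              intro i _
              rw [hp, hfneg i (-lam) (by linarith)]
          _ ≤ ∑ t ∈ univ.filter (fun t => c t ≤ -lam), u t := (hu _).1
    have h1 : φ (∑ i, f i) < r := hφ1 _ hs0S
    have h2 : r < φ u := hφ2
    rw [hφeval] at h1 h2
    linarith
end

section
/- Let T be a positive integer, p : Finset (Fin T) → ℝ a supermodular set function, and a_lo, a_hi : Fin T → ℝ with a_lo ≤ a_hi pointwise. Then the set function p' defined by p'(A) := max over X ⊆ Fin T of (p(X) − ∑_{t ∈ X \ A} a_lo t + ∑_{t ∈ A \ X} a_hi t) is supermodular: p'(X) + p'(Y) ≤ p'(X ∪ Y) + p'(X ∩ Y) for all X, Y ⊆ Fin T. -/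
/-- The truncated lower set function
`p'(A) = max_{X ⊆ Fin T} (p(X) − a_lo(X \ A) + a_hi(A \ X))` is supermodular whenever
`p` is supermodular. -/
theorem truncated_lower_supermodular
    (T : ℕ) (hT : 0 < T)
    (p : Finset (Fin T) → ℝ)
    (hsuper : ∀ X Y : Finset (Fin T), p X + p Y ≤ p (X ∪ Y) + p (X ∩ Y))
    (a_lo a_hi : Fin T → ℝ) (ha : ∀ t, a_lo t ≤ a_hi t)
    (p' : Finset (Fin T) → ℝ)
    (hp' : ∀ A, p' A = Finset.univ.sup' Finset.univ_nonempty
        (fun X : Finset (Fin T) => p X - ∑ t ∈ X \ A, a_lo t + ∑ t ∈ A \ X, a_hi t)) :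
    ∀ X Y : Finset (Fin T), p' X + p' Y ≤ p' (X ∪ Y) + p' (X ∩ Y) := by
  intro A B
  set F : Finset (Fin T) → Finset (Fin T) → ℝ :=
    fun A X => p X - ∑ t ∈ X \ A, a_lo t + ∑ t ∈ A \ X, a_hi t with hF
  obtain ⟨X0, -, hX0⟩ := Finset.exists_mem_eq_sup' Finset.univ_nonempty (F A)
  obtain ⟨Y0, -, hY0⟩ := Finset.exists_mem_eq_sup' Finset.univ_nonempty (F B)
  have hconv : ∀ (S : Finset (Fin T)) (v : Fin T → ℝ),
      ∑ t ∈ S, v t = ∑ t : Fin T, if t ∈ S then v t else 0 := by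
    intro S v
    rw [Finset.sum_ite_mem, Finset.univ_inter]
  have hlin : (∑ t ∈ A \ X0, a_hi t - ∑ t ∈ X0 \ A, a_lo t)
      + (∑ t ∈ B \ Y0, a_hi t - ∑ t ∈ Y0 \ B, a_lo t)
      ≤ (∑ t ∈ (A ∪ B) \ (X0 ∩ Y0), a_hi t - ∑ t ∈ (X0 ∩ Y0) \ (A ∪ B), a_lo t)
      + (∑ t ∈ (A ∩ B) \ (X0 ∪ Y0), a_hi t - ∑ t ∈ (X0 ∪ Y0) \ (A ∩ B), a_lo t) := by
    rw [hconv (A \ X0) a_hi, hconv (X0 \ A) a_lo, hconv (B \ Y0) a_hi,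
      hconv (Y0 \ B) a_lo, hconv ((A ∪ B) \ (X0 ∩ Y0)) a_hi,
      hconv ((X0 ∩ Y0) \ (A ∪ B)) a_lo, hconv ((A ∩ B) \ (X0 ∪ Y0)) a_hi,
      hconv ((X0 ∪ Y0) \ (A ∩ B)) a_lo]
    simp only [← Finset.sum_sub_distrib, ← Finset.sum_add_distrib]
    refine Finset.sum_le_sum fun t _ => ?_
    by_cases hx : t ∈ X0 <;> by_cases hy : t ∈ Y0 <;> by_cases hA : t ∈ A <;>
      by_cases hB : t ∈ B <;>
      simp [Finset.mem_sdiff, Finset.mem_union, Finset.mem_inter, hx, hy, hA, hB] <;>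
      linarith [ha t]
  have hkey : F A X0 + F B Y0 ≤ F (A ∪ B) (X0 ∩ Y0) + F (A ∩ B) (X0 ∪ Y0) := by
    have := hsuper X0 Y0
    simp only [hF]
    linarith [hlin]
  have h1 : F (A ∪ B) (X0 ∩ Y0) ≤ p' (A ∪ B) := by
    rw [hp']
    exact Finset.le_sup' (F (A ∪ B)) (Finset.mem_univ _)
  have h2 : F (A ∩ B) (X0 ∪ Y0) ≤ p' (A ∩ B) := by
    rw [hp']
    exact Finset.le_sup' (F (A ∩ B)) (Finset.mem_univ _)
  have hA' : p' A = F A X0 := by rw [hp']; exact hX0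
  have hB' : p' B = F B Y0 := by rw [hp']; exact hY0
  rw [hA', hB']
  linarith
end

section
/- Let T be a positive integer, b : Finset (Fin T) → ℝ a submodular set function, and a_lo, a_hi : Fin T → ℝ with a_lo ≤ a_hi pointwise. Then the set function b' defined by b'(A) := min over X ⊆ Fin T of (b(X) − ∑_{t ∈ X \ A} a_hi t + ∑_{t ∈ A \ X} a_lo t) is submodular: b'(X) + b'(Y) ≥ b'(X ∪ Y) + b'(X ∩ Y) for all X, Y ⊆ Fin T. -/
/-- The truncated upper set function
`b'(A) = min_{X ⊆ Fin T} (b(X) − a_hi(X \ A) + a_lo(A \ X))` is submodular whenever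
`b` is submodular. -/
theorem truncated_upper_submodular
    (T : ℕ) (hT : 0 < T)
    (b : Finset (Fin T) → ℝ)
    (hsub : ∀ X Y : Finset (Fin T), b X + b Y ≥ b (X ∪ Y) + b (X ∩ Y))
    (a_lo a_hi : Fin T → ℝ) (ha : ∀ t, a_lo t ≤ a_hi t)
    (b' : Finset (Fin T) → ℝ)
    (hb' : ∀ A, b' A = Finset.univ.inf' Finset.univ_nonempty
        (fun X : Finset (Fin T) => b X - ∑ t ∈ X \ A, a_hi t + ∑ t ∈ A \ X, a_lo t)) :
    ∀ X Y : Finset (Fin T), b' X + b' Y ≥ b' (X ∪ Y) + b' (X ∩ Y) := by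
  intro A B
  set g : Finset (Fin T) → Finset (Fin T) → ℝ :=
    fun X S => b X - ∑ t ∈ X \ S, a_hi t + ∑ t ∈ S \ X, a_lo t with hg
  obtain ⟨U, -, hU⟩ := Finset.exists_mem_eq_inf' (Finset.univ_nonempty)
    (fun X : Finset (Fin T) => g X A)
  obtain ⟨V, -, hV⟩ := Finset.exists_mem_eq_inf' (Finset.univ_nonempty)
    (fun X : Finset (Fin T) => g X B)
  have hA : b' A = g U A := by rw [hb']; exact hU
  have hB : b' B = g V B := by rw [hb']; exact hV
  have h1 : b' (A ∪ B) ≤ g (U ∩ V) (A ∪ B) := by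
    rw [hb']; exact Finset.inf'_le _ (Finset.mem_univ _)
  have h2 : b' (A ∩ B) ≤ g (U ∪ V) (A ∩ B) := by
    rw [hb']; exact Finset.inf'_le _ (Finset.mem_univ _)
  have hsum : ∀ (S C : Finset (Fin T)) (f : Fin T → ℝ),
      ∑ t ∈ S \ C, f t = ∑ t : Fin T, if t ∈ S \ C then f t else 0 := by
    intro S C f
    rw [Finset.sum_ite_mem, Finset.univ_inter]
  have lin :
      (- ∑ t ∈ (U ∩ V) \ (A ∪ B), a_hi t + ∑ t ∈ (A ∪ B) \ (U ∩ V), a_lo t)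
      + (- ∑ t ∈ (U ∪ V) \ (A ∩ B), a_hi t + ∑ t ∈ (A ∩ B) \ (U ∪ V), a_lo t)
      ≤ (- ∑ t ∈ U \ A, a_hi t + ∑ t ∈ A \ U, a_lo t)
      + (- ∑ t ∈ V \ B, a_hi t + ∑ t ∈ B \ V, a_lo t) := by
    rw [hsum, hsum, hsum, hsum, hsum, hsum, hsum, hsum]
    rw [← Finset.sum_neg_distrib, ← Finset.sum_neg_distrib, ← Finset.sum_neg_distrib,
      ← Finset.sum_neg_distrib]
    rw [← Finset.sum_add_distrib, ← Finset.sum_add_distrib, ← Finset.sum_add_distrib,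
      ← Finset.sum_add_distrib, ← Finset.sum_add_distrib, ← Finset.sum_add_distrib]
    apply Finset.sum_le_sum
    intro t _
    by_cases hu : t ∈ U <;> by_cases hv : t ∈ V <;>
      by_cases hac : t ∈ A <;> by_cases hbc : t ∈ B <;>
      simp [hu, hv, hac, hbc, Finset.mem_sdiff, Finset.mem_union, Finset.mem_inter] <;>
      linarith [ha t]
  have hbb := hsub U V
  have : g U A + g V B ≥ g (U ∩ V) (A ∪ B) + g (U ∪ V) (A ∩ B) := by
    simp only [hg]
    linarith
  linarith
end

section
/- Let T be a positive integer and let p, b : Finset (Fin T) → ℝ be set functions with p(∅) = b(∅) = 0 such that p is supermodular, b is submodular, and b(X) − p(Y) ≥ b(X \ Y) − p(Y \ X) for all X, Y ⊆ Fin T. Then Q(p, b) := {u : Fin T → ℝ | p(A) ≤ ∑_{t ∈ A} u t ≤ b(A) for all A ⊆ Fin T} is nonempty. -/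
set_option maxRecDepth 4000


/-- A generalized polymatroid `Q(p, b)` generated by a supermodular `p`
and submodular `b` with `p(∅) = b(∅) = 0` satisfying the cross-inequality is nonempty. -/
theorem gPolymatroid_nonempty
    (T : ℕ) (hT : 0 < T)
    (p b : Finset (Fin T) → ℝ)
    (hp0 : p ∅ = 0) (hb0 : b ∅ = 0)
    (hsuper : ∀ X Y : Finset (Fin T), p X + p Y ≤ p (X ∪ Y) + p (X ∩ Y))
    (hsub : ∀ X Y : Finset (Fin T), b X + b Y ≥ b (X ∪ Y) + b (X ∩ Y))
    (hcross : ∀ X Y : Finset (Fin T), b X - p Y ≥ b (X \ Y) - p (Y \ X)) :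
    {u : Fin T → ℝ | ∀ A : Finset (Fin T),
        p A ≤ ∑ t ∈ A, u t ∧ ∑ t ∈ A, u t ≤ b A}.Nonempty := by
  classical
  set u : Fin T → ℝ := fun t => b (Finset.Iic t) - b (Finset.Iio t) with hu
  -- upper bound lemma
  have hupper : ∀ A : Finset (Fin T), ∑ t ∈ A, u t ≤ b A := by
    intro A
    induction A using Finset.strongInduction with
    | _ A ih =>
      rcases A.eq_empty_or_nonempty with rfl | hA
      · simp [hb0]
      · set m := A.max' hA with hm
        have hmem : m ∈ A := A.max'_mem hA
        have hsub1 : A.erase m ⊂ A := Finset.erase_ssubset hmem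
        have h1 : ∑ t ∈ A.erase m, u t ≤ b (A.erase m) := ih _ hsub1
        have hunion : Finset.Iio m ∪ A = Finset.Iic m := by
          ext x
          simp only [Finset.mem_union, Finset.mem_Iio, Finset.mem_Iic]
          constructor
          · rintro (h | h)
            · exact le_of_lt h
            · exact A.le_max' x h
          · intro h
            rcases lt_or_eq_of_le h with h | h
            · exact Or.inl h
            · exact Or.inr (h ▸ hmem)
        have hinter : Finset.Iio m ∩ A = A.erase m := by
          ext x
          simp only [Finset.mem_inter, Finset.mem_Iio, Finset.mem_erase]
          constructor
          · rintro ⟨h1, h2⟩; exact ⟨ne_of_lt h1, h2⟩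
          · rintro ⟨h1, h2⟩; exact ⟨lt_of_le_of_ne (A.le_max' x h2) h1, h2⟩
        have hs := hsub (Finset.Iio m) A
        rw [hunion, hinter] at hs
        have hsum : ∑ t ∈ A, u t = u m + ∑ t ∈ A.erase m, u t :=
          (Finset.add_sum_erase A u hmem).symm
        rw [hsum, hu]
        simp only
        linarith
  -- telescoping: total sum equals b univ
  have htotal : ∑ t : Fin T, u t = b Finset.univ := by
    set f : ℕ → ℝ := fun n => b (Finset.univ.filter (fun t : Fin T => (t : ℕ) < n)) with hf
    have hstep : ∀ t : Fin T, u t = f ((t : ℕ) + 1) - f (t : ℕ) := by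
      intro t
      have h1 : Finset.Iic t = Finset.univ.filter (fun x : Fin T => (x : ℕ) < (t : ℕ) + 1) := by
        ext x; simp only [Finset.mem_Iic, Finset.mem_filter, Finset.mem_univ, true_and, Fin.le_def, Nat.lt_succ_iff]
      have h2 : Finset.Iio t = Finset.univ.filter (fun x : Fin T => (x : ℕ) < (t : ℕ)) := by
        ext x; simp only [Finset.mem_Iio, Finset.mem_filter, Finset.mem_univ, true_and, Fin.lt_def]
      rw [hu]; simp only; rw [h1, h2]
    calc ∑ t : Fin T, u t = ∑ t : Fin T, (f ((t : ℕ) + 1) - f (t : ℕ)) := by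
          exact Finset.sum_congr rfl (fun t _ => hstep t)
      _ = ∑ i ∈ Finset.range T, (f (i + 1) - f i) :=
          Fin.sum_univ_eq_sum_range (fun i => f (i + 1) - f i) T
      _ = f T - f 0 := Finset.sum_range_sub f T
      _ = b Finset.univ := by
          have h0 : Finset.univ.filter (fun t : Fin T => (t : ℕ) < 0) = ∅ := by
            ext x; simp
          have hT' : Finset.univ.filter (fun t : Fin T => (t : ℕ) < T) = Finset.univ := by
            ext x; simp [x.isLt]
          rw [hf]; simp only; rw [h0, hT', hb0]; ring
  refine ⟨u, fun A => ⟨?_, hupper A⟩⟩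
  -- lower bound
  have hc := hcross Finset.univ A
  have hAdiff : A \ Finset.univ = ∅ := Finset.sdiff_eq_empty_iff_subset.mpr (Finset.subset_univ A)
  rw [hAdiff, hp0] at hc
  -- p A ≤ b univ - b (univ \ A)
  have h2 : ∑ t ∈ Finset.univ \ A, u t + ∑ t ∈ A, u t = ∑ t : Fin T, u t :=
    Finset.sum_sdiff (Finset.subset_univ A)
  have h3 : ∑ t ∈ Finset.univ \ A, u t ≤ b (Finset.univ \ A) := hupper _
  linarith [htotal ▸ h2]
end
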